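/- arXiv:2112.10053 — 2 statements merged into one kernel-verified Lean document; each statement's English description precedes it below -/
import Mathlib

section
/- Say a reduced finite type ℂ-scheme X has property (P) if every invertible regular function on X is locally constant. Then: (a) if f : X → Y is a surjective morphism of reduced finite type ℂ-schemes and X has property (P), then Y has property (P); (b) if X and Y both have property (P), then X × Y has property (P). -/
/-!
STATEMENT 7: Property (P) for reduced finite type ℂ-schemes.

We work with (the coordinate rings of) reduced finite type affine ℂ-schemes.  An invertible
regular function on `X = Spec R` is a unit of `R`; it is *locally constant* precisely when it
lies in the ℂ-span of the idempotents of `R` (idempotents correspond to unions of connected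
components, so the ℂ-span of idempotents is exactly the ring of locally constant ℂ-valued
regular functions).  A surjective morphism `X → Y` of schemes corresponds to a ℂ-algebra map
`φ : S →ₐ[ℂ] R` inducing a surjection `Spec R → Spec S`, and the product `X × Y` corresponds
to the tensor product `R ⊗[ℂ] S`.

(a) If `f : X → Y` is surjective and `X` has property (P), then `Y` has property (P).
(b) If `X` and `Y` have property (P), then so does `X × Y`.
-/

open TensorProduct Polynomial

/-- A unit is "locally constant" iff it lies in the ℂ-span of the idempotents. -/
def IsLocConst (R : Type*) [CommRing R] [Algebra ℂ R] (u : R) : Prop :=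
  u ∈ Submodule.span ℂ {e : R | IsIdempotentElem e}

/-- Property (P): every invertible regular function is locally constant. -/
def PropP (R : Type*) [CommRing R] [Algebra ℂ R] : Prop :=
  ∀ u : Rˣ, IsLocConst R (u : R)


section Aux
variable {A : Type*} [CommRing A] [Algebra ℂ A]

/-- If `u` is annihilated by a product of distinct linear factors, it is a ℂ-combination of
idempotents (Lagrange interpolation). -/
lemma isLocConst_of_prod_eq_zero (u : A) (t : Finset ℂ)
    (h : ∏ c ∈ t, (u - algebraMap ℂ A c) = 0) : IsLocConst A u := by
  classical
  rcases t.eq_empty_or_nonempty with rfl | hne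
  · simp only [Finset.prod_empty] at h
    have : u = 0 := by
      calc u = u * 1 := by ring
      _ = 0 := by rw [h]; ring
    rw [this]
    exact Submodule.zero_mem _
  · set e : ℂ → A := fun j => aeval u (Lagrange.basis t id j) with he
    have hsum : ∑ j ∈ t, e j = 1 := by
      rw [← map_sum, Lagrange.sum_basis (Set.injOn_id _) hne, map_one]
    have hkill : ∀ j ∈ t, (u - algebraMap ℂ A j) * e j = 0 := by
      intro j hj
      have : (X - C j) * Lagrange.basis t id j =
          C (∏ k ∈ t.erase j, ((j : ℂ) - k)⁻¹) * ∏ k ∈ t, (X - C k) := by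
        unfold Lagrange.basis Lagrange.basisDivisor
        rw [Finset.prod_mul_distrib, ← map_prod]
        rw [← Finset.mul_prod_erase t _ hj]
        simp only [id_eq]
        ring
      have := congrArg (aeval u) this
      simp only [map_mul, map_sub, aeval_X, aeval_C, map_prod] at this
      rw [this, h]
      ring
    have horth : ∀ j ∈ t, ∀ k ∈ t, j ≠ k → e j * e k = 0 := by
      intro j hj k hk hjk
      have hjk' : j ∈ t.erase k := Finset.mem_erase.mpr ⟨hjk, hj⟩
      have hb : Lagrange.basis t id k =
          Lagrange.basisDivisor (id k) (id j) *
            ∏ l ∈ (t.erase k).erase j, Lagrange.basisDivisor (id k) (id l) := by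
        unfold Lagrange.basis
        rw [← Finset.mul_prod_erase _ _ hjk']
      have : e k = ((k - j)⁻¹ • (u - algebraMap ℂ A j)) *
          aeval u (∏ l ∈ (t.erase k).erase j, Lagrange.basisDivisor (id k) (id l)) := by
        rw [he]
        simp only [hb, map_mul]
        congr 1
        unfold Lagrange.basisDivisor
        simp [Algebra.smul_def]
      rw [this]
      have : e j * (((k - j)⁻¹ • (u - algebraMap ℂ A j)) *
          aeval u (∏ l ∈ (t.erase k).erase j, Lagrange.basisDivisor (id k) (id l)))
          = (k - j)⁻¹ • (((u - algebraMap ℂ A j) * e j) *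
            aeval u (∏ l ∈ (t.erase k).erase j, Lagrange.basisDivisor (id k) (id l))) := by
        rw [Algebra.smul_def, Algebra.smul_def]
        ring
      rw [this, hkill j hj]
      simp
    have hidem : ∀ j ∈ t, IsIdempotentElem (e j) := by
      intro j hj
      have : e j * (∑ k ∈ t, e k) = e j * e j := by
        rw [Finset.mul_sum]
        rw [Finset.sum_eq_single_of_mem j hj]
        intro k hk hkj
        rw [mul_comm]
        exact horth k hk j hj hkj
      unfold IsIdempotentElem
      rw [← this, hsum, mul_one]
    have hu : u = ∑ j ∈ t, j • e j := by
      have : u * (∑ j ∈ t, e j) = ∑ j ∈ t, j • e j := by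
        rw [Finset.mul_sum]
        refine Finset.sum_congr rfl fun j hj => ?_
        have : u * e j = (u - algebraMap ℂ A j) * e j + algebraMap ℂ A j * e j := by ring
        rw [this, hkill j hj, zero_add, Algebra.smul_def]
      rw [← this, hsum, mul_one]
    rw [IsLocConst, hu]
    exact Submodule.sum_mem _ fun j hj => Submodule.smul_mem _ _
      (Submodule.subset_span (hidem j hj))
/-- In a reduced ℂ-algebra, an integral element is annihilated by a product of
distinct linear factors. -/
lemma exists_prod_eq_zero_of_isIntegral [IsReduced A] (u : A) (hu : IsIntegral ℂ u) :
    ∃ t : Finset ℂ, ∏ c ∈ t, (u - algebraMap ℂ A c) = 0 := by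
  classical
  obtain ⟨p, hmonic, hp⟩ := hu
  have hsplits : p.Splits := IsAlgClosed.splits p
  have hfact : p = (p.roots.map fun c => X - C c).prod :=
    hsplits.eq_prod_roots_of_monic hmonic
  set M : Multiset ℂ := p.roots with hM
  have h0 : (M.map fun c => u - algebraMap ℂ A c).prod = 0 := by
    have hp' : (aeval u) p = 0 := hp
    have := congrArg (aeval u) hfact
    rw [hp'] at this
    rw [← Multiset.prod_hom' M (aeval u : ℂ[X] →ₐ[ℂ] A) (fun c => X - C c)] at this
    simp only [map_sub, aeval_X, aeval_C] at this
    exact this.symm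
  refine ⟨M.toFinset, ?_⟩
  have hded : (M.map fun c => u - algebraMap ℂ A c).prod
      = ∏ c ∈ M.toFinset, (u - algebraMap ℂ A c) ^ M.count c :=
    Finset.prod_multiset_map_count M _
  have hdvd : (∏ c ∈ M.toFinset, (u - algebraMap ℂ A c) ^ M.count c)
      ∣ (∏ c ∈ M.toFinset, (u - algebraMap ℂ A c)) ^ Multiset.card M := by
    rw [← Finset.prod_pow]
    exact Finset.prod_dvd_prod_of_dvd _ _ fun c hc =>
      pow_dvd_pow _ (Multiset.count_le_card c M)
  rw [hded] at h0
  rw [h0] at hdvd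
  have hnil : IsNilpotent (∏ c ∈ M.toFinset, (u - algebraMap ℂ A c)) :=
    ⟨Multiset.card M, (zero_dvd_iff.mp hdvd)⟩
  exact hnil.eq_zero

lemma isLocConst_of_isIntegral [IsReduced A] (u : A) (hu : IsIntegral ℂ u) :
    IsLocConst A u := by
  obtain ⟨t, ht⟩ := exists_prod_eq_zero_of_isIntegral u hu
  exact isLocConst_of_prod_eq_zero u t ht

/-- A reduced Noetherian ring has finitely many idempotents. -/
lemma finite_idempotents (A : Type*) [CommRing A] [IsReduced A] [IsNoetherianRing A] :
    {e : A | IsIdempotentElem e}.Finite := by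
  classical
  have hfin : (minimalPrimes A).Finite := minimalPrimes.finite_of_isNoetherianRing A
  have := hfin.to_subtype
  rw [← Set.finite_coe_iff]
  have key : ∀ e f : A, IsIdempotentElem e → IsIdempotentElem f →
      (∀ p ∈ minimalPrimes A, (e ∈ p ↔ f ∈ p)) → e = f := by
    intro e f he hf hef
    have hmem : ∀ p : Ideal A, p.IsPrime → e - f ∈ p := by
      intro p hp
      obtain ⟨q, hq, hqp⟩ := Ideal.exists_minimalPrimes_le (I := (⊥ : Ideal A))
        (J := p) bot_le
      have hqP : q.IsPrime := hq.1.1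
      have aux : ∀ g : A, IsIdempotentElem g → g ∉ q → 1 - g ∈ q := by
        intro g hg hgq
        have : g * (1 - g) ∈ q := by
          have : g * (1 - g) = 0 := by
            have := hg
            unfold IsIdempotentElem at this
            rw [mul_sub, this]; ring
          rw [this]; exact q.zero_mem
        rcases hqP.mem_or_mem this with h | h
        · exact absurd h hgq
        · exact h
      have : e - f ∈ q := by
        by_cases heq : e ∈ q
        · have hfq : f ∈ q := (hef q hq).mp heq
          exact q.sub_mem heq hfq
        · have hfq : f ∉ q := fun h => heq ((hef q hq).mpr h)
          have h1 : 1 - e ∈ q := aux e he heq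
          have h2 : 1 - f ∈ q := aux f hf hfq
          have : (1 - f) - (1 - e) ∈ q := q.sub_mem h2 h1
          simpa using this
      exact hqp this
    have : e - f ∈ nilradical A := by
      rw [nilradical_eq_sInf, Submodule.mem_sInf]
      intro p hp
      exact hmem p hp
    rw [nilradical_eq_zero] at this
    have : e - f = 0 := this
    linear_combination this
  have : Function.Injective
      (fun e : {e : A | IsIdempotentElem e} =>
        (fun p : minimalPrimes A => ((e : A) ∈ (p : Ideal A) : Prop))) := by
    intro e f hef
    ext1
    refine key e f e.2 f.2 fun p hp => ?_
    have := congrFun hef ⟨p, hp⟩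
    simp only [eq_iff_iff] at this
    exact this
  exact Finite.of_injective _ this

/-- An element in the ℂ-span of the idempotents of a reduced Noetherian ring is integral
over ℂ. -/
lemma isIntegral_of_isLocConst [IsReduced A] [IsNoetherianRing A] (u : A)
    (hu : IsLocConst A u) : IsIntegral ℂ u := by
  have hfin := finite_idempotents A
  have hint : ∀ e ∈ {e : A | IsIdempotentElem e}, IsIntegral ℂ e := by
    intro e he
    refine ⟨X * (X - C (1 : ℂ)), monic_X.mul (monic_X_sub_C 1), ?_⟩
    have h : (aeval e) (X * (X - C (1 : ℂ))) = e * (e - 1) := by simp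
    have h' : (aeval e) (X * (X - C (1 : ℂ))) = 0 := by
      rw [h, mul_sub, he, mul_one, sub_self]
    exact h'
  have hfg : (Algebra.adjoin ℂ {e : A | IsIdempotentElem e}).toSubmodule.FG :=
    fg_adjoin_of_finite hfin hint
  have hmem : u ∈ Algebra.adjoin ℂ {e : A | IsIdempotentElem e} := by
    have : Submodule.span ℂ {e : A | IsIdempotentElem e} ≤
        (Algebra.adjoin ℂ {e : A | IsIdempotentElem e}).toSubmodule :=
      Submodule.span_le.mpr Algebra.subset_adjoin
    exact this hu
  exact IsIntegral.of_mem_of_fg _ hfg _ hmem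

/-- Weak Nullstellensatz separation: over a reduced finite type ℂ-algebra, ℂ-points separate
elements. -/
lemma eq_zero_of_forall_algHom (A : Type*) [CommRing A] [Algebra ℂ A] [IsReduced A]
    [Algebra.FiniteType ℂ A] (z : A) (h : ∀ θ : A →ₐ[ℂ] ℂ, θ z = 0) : z = 0 := by
  have hJac : IsJacobsonRing A := isJacobsonRing_of_finiteType (A := ℂ)
  have hnil : z ∈ nilradical A := by
    have : nilradical A = (⊥ : Ideal A).radical := rfl
    rw [this, Ideal.radical_eq_jacobson, Ideal.jacobson]
    refine Submodule.mem_sInf.mpr ?_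
    rintro m ⟨-, hm⟩
    -- build a ℂ-point with kernel m
    letI : Field (A ⧸ m) := Ideal.Quotient.field m
    haveI : Algebra.FiniteType ℂ (A ⧸ m) :=
      Algebra.FiniteType.of_surjective (Ideal.Quotient.mkₐ ℂ m)
        Ideal.Quotient.mk_surjective
    haveI : Module.Finite ℂ (A ⧸ m) := finite_of_finite_type_of_isJacobsonRing ℂ (A ⧸ m)
    haveI : Algebra.IsIntegral ℂ (A ⧸ m) := Algebra.IsIntegral.of_finite ℂ (A ⧸ m)
    have hsurj : Function.Surjective (algebraMap ℂ (A ⧸ m)) :=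
      IsAlgClosed.algebraMap_bijective_of_isIntegral.2
    have hinj : Function.Injective (algebraMap ℂ (A ⧸ m)) :=
      (algebraMap ℂ (A ⧸ m)).injective
    let e : ℂ ≃+* (A ⧸ m) := RingEquiv.ofBijective (algebraMap ℂ (A ⧸ m)) ⟨hinj, hsurj⟩
    let θ : A →ₐ[ℂ] ℂ :=
      { toRingHom := e.symm.toRingHom.comp (Ideal.Quotient.mk m)
        commutes' := fun c => by
          have : (Ideal.Quotient.mk m) (algebraMap ℂ A c) = algebraMap ℂ (A ⧸ m) c := by
            rw [← Ideal.Quotient.algebraMap_eq, ← IsScalarTower.algebraMap_apply]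
          show e.symm ((Ideal.Quotient.mk m) (algebraMap ℂ A c)) = c
          rw [this]
          exact e.symm_apply_apply c }
    have hz := h θ
    have : e.symm ((Ideal.Quotient.mk m) z) = 0 := hz
    have hz0 : (Ideal.Quotient.mk m) z = 0 := by
      have := congrArg e this
      simpa using this
    exact Ideal.Quotient.eq_zero_iff_mem.mp hz0
  rw [nilradical_eq_zero] at hnil
  exact hnil

end Aux


lemma propP_descends (R S : Type*) [CommRing R] [Algebra ℂ R] [CommRing S] [Algebra ℂ S]
    [IsReduced R] [IsReduced S] [Algebra.FiniteType ℂ R]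
    (φ : S →ₐ[ℂ] R) (hsurj : Function.Surjective (PrimeSpectrum.comap (φ : S →+* R)))
    (hP : PropP R) : PropP S := by
  haveI : IsNoetherianRing R := Algebra.FiniteType.isNoetherianRing ℂ R
  have hker : ∀ x : S, φ x = 0 → x = 0 := by
    intro x hx
    have hx' : x ∈ nilradical S := by
      rw [nilradical_eq_sInf, Submodule.mem_sInf]
      intro p hp
      obtain ⟨q, hq⟩ := hsurj ⟨p, hp⟩
      have hpq : p = Ideal.comap (φ : S →+* R) q.asIdeal :=
        congrArg PrimeSpectrum.asIdeal hq.symm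
      rw [hpq]
      refine Ideal.mem_comap.mpr ?_
      show φ x ∈ q.asIdeal
      rw [hx]
      exact q.asIdeal.zero_mem
    rw [nilradical_eq_zero] at hx'
    simpa using hx'
  intro u
  have hunit : IsUnit (φ (u : S)) := (Units.isUnit u).map φ
  obtain ⟨v, hv⟩ := hunit
  have hloc : IsLocConst R (φ (u : S)) := by rw [← hv]; exact hP v
  have hint : IsIntegral ℂ (φ (u : S)) := isIntegral_of_isLocConst _ hloc
  obtain ⟨p, hm, hp⟩ := hint
  have hp' : (Polynomial.aeval (φ (u : S))) p = 0 := hp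
  have h0 : φ ((Polynomial.aeval (u : S)) p) = 0 := by
    rw [← Polynomial.aeval_algHom_apply]
    exact hp'
  have : (Polynomial.aeval (u : S)) p = 0 := hker _ h0
  exact isLocConst_of_isIntegral _ ⟨p, hm, this⟩


section TensorAux

variable (R S : Type*) [CommRing R] [Algebra ℂ R] [CommRing S] [Algebra ℂ S]

/-- The tensor product of finite type algebras is of finite type. -/
lemma finiteType_tensor [Algebra.FiniteType ℂ R] [Algebra.FiniteType ℂ S] :
    Algebra.FiniteType ℂ (R ⊗[ℂ] S) := by
  classical
  obtain ⟨sR, hsR⟩ := (inferInstance : Algebra.FiniteType ℂ R).1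
  obtain ⟨sS, hsS⟩ := (inferInstance : Algebra.FiniteType ℂ S).1
  refine ⟨⟨sR.image (Algebra.TensorProduct.includeLeft : R →ₐ[ℂ] R ⊗[ℂ] S) ∪
    sS.image (Algebra.TensorProduct.includeRight : S →ₐ[ℂ] R ⊗[ℂ] S), ?_⟩⟩
  rw [Finset.coe_union, Finset.coe_image, Finset.coe_image, Algebra.adjoin_union,
    ← AlgHom.map_adjoin, ← AlgHom.map_adjoin, hsR, hsS, Algebra.map_top, Algebra.map_top]
  rw [eq_top_iff]
  rintro z -
  induction z using TensorProduct.induction_on with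
  | zero => exact Subalgebra.zero_mem _
  | tmul r s =>
      have : r ⊗ₜ[ℂ] s = (Algebra.TensorProduct.includeLeft : R →ₐ[ℂ] R ⊗[ℂ] S) r *
          (Algebra.TensorProduct.includeRight : S →ₐ[ℂ] R ⊗[ℂ] S) s := by
        simp [Algebra.TensorProduct.tmul_mul_tmul]
      rw [this]
      exact mul_mem (le_sup_left (α := Subalgebra ℂ (R ⊗[ℂ] S)) (AlgHom.mem_range_self _ r))
        (le_sup_right (α := Subalgebra ℂ (R ⊗[ℂ] S)) (AlgHom.mem_range_self _ s))
  | add x y hx hy => exact add_mem hx hy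

/-- Specialization at a ℂ-point of the left factor. -/
noncomputable def specL (θ₁ : R →ₐ[ℂ] ℂ) : R ⊗[ℂ] S →ₐ[ℂ] S :=
  Algebra.TensorProduct.lift ((Algebra.ofId ℂ S).comp θ₁) (AlgHom.id ℂ S)
    (fun _ _ => Commute.all _ _)

/-- Specialization at a ℂ-point of the right factor. -/
noncomputable def specR (θ₂ : S →ₐ[ℂ] ℂ) : R ⊗[ℂ] S →ₐ[ℂ] R :=
  Algebra.TensorProduct.lift (AlgHom.id ℂ R) ((Algebra.ofId ℂ R).comp θ₂)
    (fun _ _ => Commute.all _ _)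

variable {R S}

@[simp] lemma specL_tmul (θ₁ : R →ₐ[ℂ] ℂ) (r : R) (s : S) :
    specL R S θ₁ (r ⊗ₜ[ℂ] s) = θ₁ r • s := by
  simp [specL, Algebra.TensorProduct.lift_tmul, Algebra.ofId_apply, Algebra.smul_def]

@[simp] lemma specR_tmul (θ₂ : S →ₐ[ℂ] ℂ) (r : R) (s : S) :
    specR R S θ₂ (r ⊗ₜ[ℂ] s) = θ₂ s • r := by
  simp [specR, Algebra.TensorProduct.lift_tmul, Algebra.ofId_apply, Algebra.smul_def,
    mul_comm]

lemma spec_comm (θ₁ : R →ₐ[ℂ] ℂ) (θ₂ : S →ₐ[ℂ] ℂ) (z : R ⊗[ℂ] S) :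
    θ₂ (specL R S θ₁ z) = θ₁ (specR R S θ₂ z) := by
  have : θ₂.comp (specL R S θ₁) = θ₁.comp (specR R S θ₂) := by
    apply Algebra.TensorProduct.ext
    · ext r
      simp [Algebra.smul_def]
    · ext s
      simp [Algebra.smul_def]
  exact AlgHom.congr_fun this z

/-- Every ℂ-point of the tensor product factors through a specialization. -/
lemma algHom_factor (θ : R ⊗[ℂ] S →ₐ[ℂ] ℂ) (z : R ⊗[ℂ] S) :
    θ z = (θ.comp (Algebra.TensorProduct.includeRight : S →ₐ[ℂ] R ⊗[ℂ] S))
      (specL R S (θ.comp (Algebra.TensorProduct.includeLeft : R →ₐ[ℂ] R ⊗[ℂ] S)) z) := by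
  have : θ = (θ.comp (Algebra.TensorProduct.includeRight : S →ₐ[ℂ] R ⊗[ℂ] S)).comp
      (specL R S (θ.comp (Algebra.TensorProduct.includeLeft : R →ₐ[ℂ] R ⊗[ℂ] S))) := by
    apply Algebra.TensorProduct.ext
    · ext r
      simp only [AlgHom.coe_comp, Function.comp_apply,
        Algebra.TensorProduct.includeLeft_apply, specL_tmul, Algebra.smul_def, map_mul,
        AlgHom.commutes, Algebra.TensorProduct.includeRight_apply, map_one, mul_one]
      simp
    · ext s
      simp [← Algebra.TensorProduct.one_def]
  exact AlgHom.congr_fun this z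

end TensorAux


section TensorSep

variable {R S : Type*} [CommRing R] [Algebra ℂ R] [CommRing S] [Algebra ℂ S]

/-- If ℂ-points separate elements of `R` and of `S`, then pairs of ℂ-points separate
elements of `R ⊗[ℂ] S`. -/
lemma tensor_eq_zero_of_pairs
    (hR : ∀ r : R, (∀ θ : R →ₐ[ℂ] ℂ, θ r = 0) → r = 0)
    (hS : ∀ s : S, (∀ θ : S →ₐ[ℂ] ℂ, θ s = 0) → s = 0)
    (z : R ⊗[ℂ] S)
    (h : ∀ (θ₁ : R →ₐ[ℂ] ℂ) (θ₂ : S →ₐ[ℂ] ℂ), θ₂ (specL R S θ₁ z) = 0) : z = 0 := by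
  classical
  set ι := Module.Basis.ofVectorSpaceIndex ℂ S
  set b : Module.Basis ι ℂ S := Module.Basis.ofVectorSpace ℂ S
  let g : (R ⊗[ℂ] S) ≃ₗ[ℂ] (ι →₀ R) :=
    (TensorProduct.congr (LinearEquiv.refl ℂ R) b.repr).trans
      (TensorProduct.finsuppScalarRight ℂ ℂ R ι)
  have key : ∀ (θ₁ : R →ₐ[ℂ] ℂ) (y : R ⊗[ℂ] S) (i : ι),
      θ₁ (g y i) = b.repr (specL R S θ₁ y) i := by
    intro θ₁ y i
    induction y using TensorProduct.induction_on with
    | zero => simp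
    | tmul r s =>
        have hg : g (r ⊗ₜ[ℂ] s) i = b.repr s i • r := by
          show (TensorProduct.finsuppScalarRight ℂ ℂ R ι)
            ((TensorProduct.congr (LinearEquiv.refl ℂ R) b.repr) (r ⊗ₜ[ℂ] s)) i = _
          rw [TensorProduct.congr_tmul]
          simp
        rw [hg, specL_tmul]
        rw [map_smul, map_smul]
        simp [Algebra.smul_def, mul_comm]
    | add x y hx hy =>
        simp only [map_add, Finsupp.add_apply] at *
        rw [hx, hy]
  have hz : ∀ i : ι, g z i = 0 := by
    intro i
    refine hR _ fun θ₁ => ?_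
    rw [key θ₁ z i]
    have : specL R S θ₁ z = 0 := hS _ fun θ₂ => h θ₁ θ₂
    rw [this, map_zero]
    rfl
  have : g z = 0 := Finsupp.ext hz
  have := congrArg g.symm this
  simpa using this

/-- The tensor product of two reduced finite type ℂ-algebras is reduced. -/
lemma isReduced_tensor (R S : Type*) [CommRing R] [Algebra ℂ R] [CommRing S] [Algebra ℂ S]
    [IsReduced R] [IsReduced S] [Algebra.FiniteType ℂ R] [Algebra.FiniteType ℂ S] :
    IsReduced (R ⊗[ℂ] S) := by
  rw [isReduced_iff]
  intro z hz
  refine tensor_eq_zero_of_pairs (fun r hr => eq_zero_of_forall_algHom R r hr)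
    (fun s hs => eq_zero_of_forall_algHom S s hs) z fun θ₁ θ₂ => ?_
  have : IsNilpotent (θ₂ (specL R S θ₁ z)) := by
    have := hz.map ((θ₂.comp (specL R S θ₁)) : R ⊗[ℂ] S →+* ℂ)
    simpa using this
  exact this.eq_zero

end TensorSep


lemma propP_tensor (R S : Type*) [CommRing R] [Algebra ℂ R] [CommRing S] [Algebra ℂ S]
    [IsReduced R] [IsReduced S] [Algebra.FiniteType ℂ R] [Algebra.FiniteType ℂ S]
    (hPR : PropP R) (hPS : PropP S) : PropP (R ⊗[ℂ] S) := by
  classical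
  haveI : IsNoetherianRing R := Algebra.FiniteType.isNoetherianRing ℂ R
  haveI : IsNoetherianRing S := Algebra.FiniteType.isNoetherianRing ℂ S
  haveI : Algebra.FiniteType ℂ (R ⊗[ℂ] S) := finiteType_tensor R S
  haveI : IsReduced (R ⊗[ℂ] S) := isReduced_tensor R S
  intro w
  set E : Set R := {e : R | IsIdempotentElem e} with hE
  have hEfin : E.Finite := finite_idempotents R
  haveI := hEfin.to_subtype
  -- the "component class" of a ℂ-point of `R`: its values on the idempotents
  set F : (R →ₐ[ℂ] ℂ) → (E → ℂ) := fun θ₁ e => θ₁ e with hF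
  have hFfin : (Set.range F).Finite := by
    have hsub : Set.range F ⊆ {f : E → ℂ | ∀ e, f e ∈ ({0, 1} : Set ℂ)} := by
      rintro f ⟨θ₁, rfl⟩
      intro e
      have he : IsIdempotentElem (θ₁ (e : R)) := by
        have h2 := e.2
        unfold IsIdempotentElem at h2 ⊢
        rw [← map_mul, h2]
      exact IsIdempotentElem.iff_eq_zero_or_one.mp he
    exact (Set.Finite.pi' fun _ => ((Set.finite_singleton (1 : ℂ)).insert 0)).subset hsub
  -- specializing `w` at a ℂ-point of `R` only depends on the component class
  set G : (R →ₐ[ℂ] ℂ) → S := fun θ₁ => specL R S θ₁ (w : R ⊗[ℂ] S) with hG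
  have hGF : ∀ θ₁ θ₁' : (R →ₐ[ℂ] ℂ), F θ₁ = F θ₁' → G θ₁ = G θ₁' := by
    intro θ₁ θ₁' hFeq
    have hsep : ∀ θ₂ : S →ₐ[ℂ] ℂ, θ₂ (G θ₁ - G θ₁') = 0 := by
      intro θ₂
      rw [map_sub, hG]
      simp only
      rw [spec_comm, spec_comm]
      obtain ⟨v, hv⟩ := (Units.isUnit w).map (specR R S θ₂)
      have hloc : IsLocConst R (specR R S θ₂ (w : R ⊗[ℂ] S)) := by
        rw [show specR R S θ₂ (w : R ⊗[ℂ] S) = (v : R) from hv.symm]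
        exact hPR v
      have heq : θ₁ (specR R S θ₂ (w : R ⊗[ℂ] S)) = θ₁' (specR R S θ₂ (w : R ⊗[ℂ] S)) := by
        refine LinearMap.eqOn_span (R := ℂ) (s := E)
          (f := θ₁.toLinearMap) (g := θ₁'.toLinearMap) ?_ hloc
        intro e he
        exact congrFun hFeq ⟨e, he⟩
      rw [heq, sub_self]
    have := eq_zero_of_forall_algHom S _ hsep
    exact sub_eq_zero.mp this
  have hGfin : (Set.range G).Finite := by
    haveI := hFfin.to_subtype
    have hsub : Set.range G ⊆
        Set.range (fun v : (Set.range F) => G (Exists.choose v.2)) := by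
      rintro x ⟨θ₁, rfl⟩
      exact ⟨⟨F θ₁, ⟨θ₁, rfl⟩⟩, hGF _ θ₁ (Exists.choose_spec (⟨θ₁, rfl⟩ : ∃ θ, F θ = F θ₁))⟩
    exact (Set.finite_range _).subset hsub
  -- a finite annihilating set of values for each specialization
  have hT : ∀ x ∈ Set.range G, ∃ t : Finset ℂ, ∏ c ∈ t, (x - algebraMap ℂ S c) = 0 := by
    rintro x ⟨θ₁, rfl⟩
    obtain ⟨v, hv⟩ := (Units.isUnit w).map (specL R S θ₁)
    have hloc : IsLocConst S (G θ₁) := by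
      rw [show G θ₁ = (v : S) from hv.symm]
      exact hPS v
    exact exists_prod_eq_zero_of_isIntegral _ (isIntegral_of_isLocConst _ hloc)
  choose! tf htf using hT
  set t₀ : Finset ℂ := hGfin.toFinset.biUnion tf with ht₀
  -- every ℂ-point of the tensor product sends `w` into `t₀`
  have hval : ∀ θ : R ⊗[ℂ] S →ₐ[ℂ] ℂ, θ (w : R ⊗[ℂ] S) ∈ t₀ := by
    intro θ
    set θ₁ : R →ₐ[ℂ] ℂ :=
      θ.comp (Algebra.TensorProduct.includeLeft : R →ₐ[ℂ] R ⊗[ℂ] S) with hθ₁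
    set θ₂ : S →ₐ[ℂ] ℂ :=
      θ.comp (Algebra.TensorProduct.includeRight : S →ₐ[ℂ] R ⊗[ℂ] S) with hθ₂
    have hfac : θ (w : R ⊗[ℂ] S) = θ₂ (G θ₁) := algHom_factor θ (w : R ⊗[ℂ] S)
    have hx : G θ₁ ∈ Set.range G := ⟨θ₁, rfl⟩
    have h2 : ∏ c ∈ tf (G θ₁), (G θ₁ - algebraMap ℂ S c) = 0 := htf _ hx
    have h3 : ∏ c ∈ tf (G θ₁), (θ₂ (G θ₁) - c) = 0 := by
      have := congrArg θ₂ h2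
      rw [map_prod] at this
      simp only [map_sub, AlgHom.commutes] at this
      simpa using this
    obtain ⟨c, hc, hc0⟩ := Finset.prod_eq_zero_iff.mp h3
    have : θ (w : R ⊗[ℂ] S) = c := by rw [hfac]; exact sub_eq_zero.mp hc0
    rw [this]
    exact Finset.mem_biUnion.mpr ⟨G θ₁, hGfin.mem_toFinset.mpr hx, hc⟩
  -- hence `w` is annihilated by a product of distinct linear factors
  have hz : ∏ c ∈ t₀, ((w : R ⊗[ℂ] S) - algebraMap ℂ (R ⊗[ℂ] S) c) = 0 := by
    refine eq_zero_of_forall_algHom (R ⊗[ℂ] S) _ fun θ => ?_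
    rw [map_prod]
    refine Finset.prod_eq_zero (hval θ) ?_
    rw [map_sub, AlgHom.commutes]
    simp
  exact isLocConst_of_prod_eq_zero _ t₀ hz

theorem propP_descends_and_products
    (R S : Type*) [CommRing R] [Algebra ℂ R] [CommRing S] [Algebra ℂ S]
    [IsReduced R] [IsReduced S] [Algebra.FiniteType ℂ R] [Algebra.FiniteType ℂ S] :
    -- (a) descent along a surjective morphism `Spec R → Spec S`
    ((∀ φ : S →ₐ[ℂ] R, Function.Surjective (PrimeSpectrum.comap (φ : S →+* R)) →
        PropP R → PropP S) ∧
    -- (b) products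
      (PropP R → PropP S → PropP (R ⊗[ℂ] S))) := by
  exact ⟨fun φ hsurj hP => propP_descends R S φ hsurj hP,
    fun hPR hPS => propP_tensor R S hPR hPS⟩
end

section
/- Let X be a reduced finite type complex scheme that is covered by finitely many closed subschemes Xᵢ, each of which is the image of a surjective morphism from a finite product of reduced schemes each admitting a surjective morphism from a scheme with only constant invertible functions. Then every invertible regular function on X is locally constant. -/
/-!
STATEMENT 14: Let `X` be a reduced finite type complex scheme covered by finitely many
closed subschemes `Xᵢ`, each of which is the image of a surjective morphism from a finite
product of reduced schemes, each factor admitting a surjective morphism from a scheme with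
only constant invertible functions.  Then every invertible regular function on `X` is
locally constant.

We work with coordinate rings.  `X = Spec R` with `R` a reduced finite type ℂ-algebra; the
closed subschemes `Xᵢ = Spec (R/Iᵢ)` cover `X` iff `⋂ᵢ Iᵢ = 0` (as `R` is reduced); a
surjective morphism of affine ℂ-schemes is a ℂ-algebra map inducing a surjection on prime
spectra; a finite product of affine schemes corresponds to the tensor product
`⨂ⱼ Sᵢⱼ` of their coordinate rings; "only constant invertible functions" means every unit
comes from `ℂˣ`; and an invertible regular function is locally constant iff it lies in the
ℂ-span of the idempotents of `R`.
-/

open scoped PiTensorProduct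
open scoped TensorProduct

/-- "Only constant invertible functions" predicate. -/
def ConstU (B : Type*) [CommRing B] [Algebra ℂ B] : Prop :=
  ∀ x y : B, x * y = 1 → ∃ c : ℂ, x = algebraMap ℂ B c

/-- A ring hom that is surjective on prime spectra has kernel contained in the nilradical,
hence is injective on a reduced source. -/
lemma injective_of_comap_surjective {S T : Type*} [CommRing S] [CommRing T] [IsReduced S]
    (f : S →+* T) (hf : Function.Surjective (PrimeSpectrum.comap f)) :
    Function.Injective f := by
  rw [injective_iff_map_eq_zero]
  intro a ha
  have : a ∈ nilradical S := by
    rw [nilradical_eq_sInf, Submodule.mem_sInf]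
    intro p hp
    obtain ⟨q, hq⟩ := hf ⟨p, hp⟩
    have : p = q.asIdeal.comap f := by
      have := congrArg PrimeSpectrum.asIdeal hq
      exact this.symm
    rw [this]
    show f a ∈ q.asIdeal
    rw [ha]; exact q.asIdeal.zero_mem
  rw [nilradical_eq_zero] at this
  simpa using this

lemma constU_of_surjective {S T : Type*} [CommRing S] [CommRing T] [Algebra ℂ S] [Algebra ℂ T]
    [IsReduced S] (ψ : S →ₐ[ℂ] T)
    (hψ : Function.Surjective (PrimeSpectrum.comap (ψ : S →+* T)))
    (hT : ∀ u : Tˣ, ∃ c : ℂˣ, (u : T) = algebraMap ℂ T (c : ℂ)) : ConstU S := by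
  intro x y hxy
  have hinj : Function.Injective (ψ : S →+* T) := injective_of_comap_surjective _ hψ
  have h1 : (ψ x) * (ψ y) = 1 := by rw [← map_mul, hxy, map_one]
  obtain ⟨c, hc⟩ := hT ⟨ψ x, ψ y, h1, by rw [mul_comm] at h1; exact h1⟩
  refine ⟨c, hinj ?_⟩
  simpa [AlgHom.commutes] using hc

lemma constU_subalgebra {A : Type*} [CommRing A] [Algebra ℂ A] (hA : ConstU A)
    (A' : Subalgebra ℂ A) : ConstU A' := by
  intro x y hxy
  obtain ⟨c, hc⟩ := hA x y (by exact_mod_cast congrArg (Subtype.val) hxy)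
  exact ⟨c, Subtype.ext (by simpa using hc)⟩

/-- Nullstellensatz: every maximal ideal of a finite type `ℂ`-algebra is the kernel of a
character with values in `ℂ`. -/
lemma exists_char_of_isMaximal (B : Type*) [CommRing B] [Algebra ℂ B] [Algebra.FiniteType ℂ B]
    (M : Ideal B) (hM : M.IsMaximal) : ∃ ε : B →ₐ[ℂ] ℂ, ∀ b ∈ M, ε b = 0 := by
  obtain ⟨N, π, hπ⟩ := Algebra.FiniteType.iff_quotient_mvPolynomial''.mp ‹Algebra.FiniteType ℂ B›
  haveI := hM
  haveI hM' : (M.comap (π : MvPolynomial (Fin N) ℂ →+* B)).IsMaximal :=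
    Ideal.comap_isMaximal_of_surjective _ hπ
  obtain ⟨x, hx⟩ := (MvPolynomial.isMaximal_iff_eq_vanishingIdeal_singleton).mp hM'
  have hkill : ∀ p ∈ RingHom.ker π, (MvPolynomial.aeval x : MvPolynomial (Fin N) ℂ →ₐ[ℂ] ℂ) p = 0 := by
    intro p hp
    have hp' : p ∈ M.comap (π : MvPolynomial (Fin N) ℂ →+* B) := by
      simp only [Ideal.mem_comap]
      show π p ∈ M
      rw [show π p = 0 from hp]
      exact M.zero_mem
    rw [hx] at hp'
    have := (MvPolynomial.mem_vanishingIdeal_singleton_iff x p).mp hp'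
    rwa [show (MvPolynomial.aeval x : MvPolynomial (Fin N) ℂ →ₐ[ℂ] ℂ) p
        = MvPolynomial.eval x p from rfl]
  let e := Ideal.quotientKerAlgEquivOfSurjective hπ
  refine ⟨(Ideal.Quotient.liftₐ (RingHom.ker π) (MvPolynomial.aeval x) hkill).comp
    (e.symm.toAlgHom), ?_⟩
  intro b hb
  obtain ⟨p, rfl⟩ := hπ b
  have he : e.symm (π p) = Ideal.Quotient.mk (RingHom.ker π) p := by
    rw [AlgEquiv.symm_apply_eq]
    rfl
  simp only [AlgHom.coe_comp, AlgEquiv.toAlgHom_eq_coe, AlgHom.coe_coe, Function.comp_apply, he]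
  have : (Ideal.Quotient.liftₐ (RingHom.ker π) (MvPolynomial.aeval x) hkill)
      (Ideal.Quotient.mk (RingHom.ker π) p) = MvPolynomial.aeval x p := by
    rfl
  change (Ideal.Quotient.liftₐ (RingHom.ker π) (MvPolynomial.aeval x) hkill) (e.symm (π p)) = 0
  rw [he, this]
  have hp' : p ∈ M.comap (π : MvPolynomial (Fin N) ℂ →+* B) := hb
  rw [hx] at hp'
  exact (MvPolynomial.mem_vanishingIdeal_singleton_iff x p).mp hp'

/-- In a reduced finite type `ℂ`-algebra, an element killed by every character is zero. -/
lemma eq_zero_of_forall_char (B : Type*) [CommRing B] [Algebra ℂ B] [IsReduced B]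
    [Algebra.FiniteType ℂ B] (x : B) (h : ∀ ε : B →ₐ[ℂ] ℂ, ε x = 0) : x = 0 := by
  obtain ⟨N, π, hπ⟩ := Algebra.FiniteType.iff_quotient_mvPolynomial''.mp ‹Algebra.FiniteType ℂ B›
  haveI : IsJacobsonRing B := isJacobsonRing_of_surjective ⟨(π : MvPolynomial (Fin N) ℂ →+* B), hπ⟩
  have hx : x ∈ ((⊥ : Ideal B).jacobson) := by
    rw [Ideal.jacobson]
    rw [Ideal.mem_sInf]
    rintro J ⟨-, hJ⟩
    obtain ⟨ε, hε⟩ := exists_char_of_isMaximal B J hJ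
    have hle : J ≤ RingHom.ker (ε : B →+* ℂ) := fun b hb => hε b hb
    have hne : RingHom.ker (ε : B →+* ℂ) ≠ ⊤ := by
      rw [Ideal.ne_top_iff_one]
      simp [RingHom.mem_ker]
    have : J = RingHom.ker (ε : B →+* ℂ) := hJ.eq_of_le hne hle
    rw [this]
    exact h ε
  rw [← Ideal.radical_eq_jacobson] at hx
  have : IsNilpotent x := by
    rwa [← mem_nilradical, nilradical]
  exact this.eq_zero

section ProdAlgHom

open PiTensorProduct

variable {ι : Type} [Fintype ι] [DecidableEq ι] (A : ι → Type)
  [∀ j, CommRing (A j)] [∀ j, Algebra ℂ (A j)]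
  {B : Type} [CommRing B] [Algebra ℂ B]

/-- The algebra map `⨂ⱼ Aⱼ → B` given by a family of algebra maps `Aⱼ → B` into a
commutative algebra. -/
noncomputable def prodAlgHom (δ : ∀ j, A j →ₐ[ℂ] B) : (⨂[ℂ] j, A j) →ₐ[ℂ] B :=
  PiTensorProduct.liftAlgHom
    ((MultilinearMap.mkPiAlgebra ℂ ι B).compLinearMap fun j => (δ j).toLinearMap)
    (by simp) (by intro x y; simp [Finset.prod_mul_distrib])

lemma prodAlgHom_tprod (δ : ∀ j, A j →ₐ[ℂ] B) (a : ∀ j, A j) :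
    prodAlgHom A δ (tprod ℂ a) = ∏ j, δ j (a j) := by
  show PiTensorProduct.lift _ (tprod ℂ a) = _
  rw [PiTensorProduct.lift.tprod]
  simp

lemma prodAlgHom_single (δ : ∀ j, A j →ₐ[ℂ] B) (j : ι) (x : A j) :
    prodAlgHom A δ (PiTensorProduct.singleAlgHom (R := ℂ) j x) = δ j x := by
  rw [PiTensorProduct.singleAlgHom_apply, prodAlgHom_tprod]
  refine Finset.prod_eq_single_of_mem j (Finset.mem_univ j) ?_ |>.trans ?_
  · intro j' _ hne
    rw [show (MonoidHom.mulSingle A j x : ∀ i, A i) j' = 1 from Pi.mulSingle_eq_of_ne hne x,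
      _root_.map_one]
  · rw [show (MonoidHom.mulSingle A j x : ∀ i, A i) j = x from Pi.mulSingle_eq_same j x]

lemma eq_prodAlgHom (F : (⨂[ℂ] j, A j) →ₐ[ℂ] B) :
    F = prodAlgHom A (fun j => F.comp (PiTensorProduct.singleAlgHom (R := ℂ) j)) := by
  apply PiTensorProduct.algHom_ext
  intro j
  refine AlgHom.ext fun x => ?_
  rw [AlgHom.comp_apply, AlgHom.comp_apply, prodAlgHom_single, AlgHom.comp_apply]

lemma prodAlgHom_congr_units (j₀ : ι) (γ δ : ∀ j, A j →ₐ[ℂ] ℂ)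
    (hγδ : ∀ j, j ≠ j₀ → γ j = δ j) (u v : ⨂[ℂ] j, A j) (huv : u * v = 1)
    (hA : ConstU (A j₀)) : prodAlgHom A γ u = prodAlgHom A δ u := by
  set mixed : ∀ j, A j →ₐ[ℂ] A j₀ :=
    Function.update (fun j => (Algebra.ofId ℂ (A j₀)).comp (γ j)) j₀ (AlgHom.id ℂ (A j₀))
    with hmixed
  set Ψ : (⨂[ℂ] j, A j) →ₐ[ℂ] A j₀ := prodAlgHom A mixed with hΨ
  have key : ∀ (θ : ∀ j, A j →ₐ[ℂ] ℂ), (∀ j, j ≠ j₀ → θ j = γ j) →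
      prodAlgHom A θ = (θ j₀).comp Ψ := by
    intro θ hθ
    apply PiTensorProduct.algHom_ext
    intro j
    ext x
    show prodAlgHom A θ (PiTensorProduct.singleAlgHom (R := ℂ) j x)
      = θ j₀ (Ψ (PiTensorProduct.singleAlgHom (R := ℂ) j x))
    rw [prodAlgHom_single, hΨ, prodAlgHom_single]
    rcases eq_or_ne j j₀ with rfl | hne
    · rw [show mixed j = AlgHom.id ℂ (A j) from Function.update_self _ _ _]
      rfl
    · rw [hθ j hne,
        show mixed j = (Algebra.ofId ℂ (A j₀)).comp (γ j) from Function.update_of_ne hne _ _]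
      simp [Algebra.ofId_apply, AlgHom.commutes]
  obtain ⟨c, hc⟩ := hA (Ψ u) (Ψ v) (by rw [← _root_.map_mul, huv, _root_.map_one])
  rw [key γ (fun _ _ => rfl), key δ (fun j h => (hγδ j h).symm)]
  simp only [AlgHom.comp_apply, hc, AlgHom.commutes]

lemma chars_agree {m : ℕ} (A : Fin m → Type) [∀ j, CommRing (A j)] [∀ j, Algebra ℂ (A j)]
    (hA : ∀ j, ConstU (A j)) (u v : ⨂[ℂ] j, A j) (huv : u * v = 1)
    (ε ε' : (⨂[ℂ] j, A j) →ₐ[ℂ] ℂ) : ε u = ε' u := by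
  set β := fun j => ε.comp (PiTensorProduct.singleAlgHom (R := ℂ) j) with hβ
  set β' := fun j => ε'.comp (PiTensorProduct.singleAlgHom (R := ℂ) j) with hβ'
  set fam : ℕ → ∀ j, A j →ₐ[ℂ] ℂ := fun t j => if (j : ℕ) < t then β' j else β j with hfam
  have h0 : fam 0 = β := funext fun j => if_neg (Nat.not_lt_zero _)
  have hm : fam m = β' := funext fun j => if_pos j.2
  have step : ∀ t, prodAlgHom A (fam t) u = prodAlgHom A (fam 0) u := by
    intro t
    induction t with
    | zero => rfl
    | succ t ih =>
      rcases lt_or_ge t m with ht | ht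
      · rw [← ih]
        refine prodAlgHom_congr_units A ⟨t, ht⟩ (fam (t + 1)) (fam t) ?_ u v huv (hA _)
        intro j hne
        have hj : (j : ℕ) ≠ t := fun h => hne (Fin.ext h)
        have : ((j : ℕ) < t + 1) ↔ ((j : ℕ) < t) := by omega
        simp only [hfam]
        rw [if_congr this rfl rfl]
      · have : fam (t + 1) = fam t := by
          funext j
          have h1 : (j : ℕ) < t := lt_of_lt_of_le j.2 ht
          simp only [hfam, if_pos h1, if_pos (Nat.lt_succ_of_lt h1)]
        rw [this, ih]
  have e1 : ε = prodAlgHom A β := eq_prodAlgHom A ε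
  have e2 : ε' = prodAlgHom A β' := eq_prodAlgHom A ε'
  rw [e1, e2, ← h0, ← hm, step m]

end ProdAlgHom

section Core

open PiTensorProduct

variable {m : ℕ} (A : Fin m → Type) [∀ j, CommRing (A j)] [∀ j, Algebra ℂ (A j)]

lemma tprod_eq_prod_single (a : ∀ j, A j) :
    tprod ℂ a = ∏ j, PiTensorProduct.singleAlgHom (R := ℂ) j (a j) := by
  conv_lhs => rw [← Finset.univ_prod_mulSingle a]
  rw [PiTensorProduct.tprod_prod]
  rfl

set_option maxHeartbeats 2000000 in
set_option synthInstance.maxHeartbeats 200000 in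
lemma core_two_primes (hA : ∀ j, ConstU (A j)) (u v : ⨂[ℂ] j, A j) (huv : u * v = 1)
    (q₁ q₂ : Ideal (⨂[ℂ] j, A j)) (hq₁ : q₁.IsPrime) (hq₂ : q₂.IsPrime)
    (d₁ d₂ : ℂ) (h₁ : u - algebraMap ℂ _ d₁ ∈ q₁) (h₂ : u - algebraMap ℂ _ d₂ ∈ q₂) :
    d₁ = d₂ := by
  classical
  -- finite representations of `u` and `v` as sums of pure tensors
  have hu : u ∈ Submodule.span ℂ (Set.range (tprod ℂ (s := A))) := by
    rw [PiTensorProduct.span_tprod_eq_top]; trivial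
  have hv : v ∈ Submodule.span ℂ (Set.range (tprod ℂ (s := A))) := by
    rw [PiTensorProduct.span_tprod_eq_top]; trivial
  rw [Finsupp.mem_span_range_iff_exists_finsupp] at hu hv
  obtain ⟨cu, hcu⟩ := hu
  obtain ⟨cv, hcv⟩ := hv
  -- finitely generated subalgebras containing all the entries
  set G : ∀ j, Finset (A j) :=
    fun j => (cu.support.image fun a => a j) ∪ (cv.support.image fun a => a j) with hG
  set A' : ∀ j, Subalgebra ℂ (A j) := fun j => Algebra.adjoin ℂ ((G j : Set (A j))) with hA'
  have hmemu : ∀ a ∈ cu.support, ∀ j, a j ∈ A' j := by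
    intro a ha j
    exact Algebra.subset_adjoin (by
      simp only [hG, Finset.coe_union, Set.mem_union, Finset.coe_image, Set.mem_image]
      exact Or.inl ⟨a, by simpa using ha, rfl⟩)
  have hmemv : ∀ a ∈ cv.support, ∀ j, a j ∈ A' j := by
    intro a ha j
    exact Algebra.subset_adjoin (by
      simp only [hG, Finset.coe_union, Set.mem_union, Finset.coe_image, Set.mem_image]
      exact Or.inr ⟨a, by simpa using ha, rfl⟩)
  -- lifting pure tensors to the subalgebra tensor product
  set L : (∀ j, A j) → (⨂[ℂ] j, ↥(A' j)) := fun a =>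
    if h : ∀ j, a j ∈ A' j then tprod ℂ (fun j => (⟨a j, h j⟩ : A' j)) else 0 with hL
  set u₀ : ⨂[ℂ] j, ↥(A' j) := cu.sum fun a r => r • L a with hu₀
  set v₀ : ⨂[ℂ] j, ↥(A' j) := cv.sum fun a r => r • L a with hv₀
  -- the inclusion algebra homomorphism
  set Φ : (⨂[ℂ] j, ↥(A' j)) →ₐ[ℂ] (⨂[ℂ] j, A j) :=
    prodAlgHom _ (fun j => (PiTensorProduct.singleAlgHom (R := ℂ) j).comp (A' j).val) with hΦ
  have hΦt : ∀ (a' : ∀ j, ↥(A' j)), Φ (tprod ℂ a') = tprod ℂ (fun j => (a' j : A j)) := by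
    intro a'
    rw [hΦ, prodAlgHom_tprod, tprod_eq_prod_single]
    rfl
  have hΦL : ∀ a, (∀ j, a j ∈ A' j) → Φ (L a) = tprod ℂ a := by
    intro a h
    rw [hL]
    simp only [dif_pos h]
    rw [hΦt]
  have hΦu : Φ u₀ = u := by
    rw [hu₀, map_finsuppSum, ← hcu]
    refine Finsupp.sum_congr fun a ha => ?_
    rw [← AlgHom.toLinearMap_apply, LinearMap.map_smul, AlgHom.toLinearMap_apply,
      hΦL a (hmemu a ha)]
  have hΦv : Φ v₀ = v := by
    rw [hv₀, map_finsuppSum, ← hcv]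
    refine Finsupp.sum_congr fun a ha => ?_
    rw [← AlgHom.toLinearMap_apply, LinearMap.map_smul, AlgHom.toLinearMap_apply,
      hΦL a (hmemv a ha)]
  -- `Φ` is injective (it has a linear retraction)
  choose π hπ using fun j => LinearMap.exists_leftInverse_of_injective
    ((A' j).val.toLinearMap) (LinearMap.ker_eq_bot.mpr Subtype.val_injective)
  set Lret : (⨂[ℂ] j, A j) →ₗ[ℂ] (⨂[ℂ] j, ↥(A' j)) :=
    PiTensorProduct.lift ((PiTensorProduct.tprod ℂ).compLinearMap π) with hLret
  have hretr : ∀ x, Lret (Φ x) = x := by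
    have h : Lret ∘ₗ Φ.toLinearMap = LinearMap.id := by
      apply PiTensorProduct.ext
      apply MultilinearMap.ext
      intro a'
      simp only [LinearMap.compMultilinearMap_apply, LinearMap.coe_comp, Function.comp_apply,
        AlgHom.toLinearMap_apply, LinearMap.id_coe, id_eq]
      rw [hΦt, hLret]
      rw [PiTensorProduct.lift.tprod]
      simp only [MultilinearMap.compLinearMap_apply]
      congr 1
      funext j
      exact DFunLike.congr_fun (hπ j) (a' j)
    intro x
    exact DFunLike.congr_fun h x
  have hΦinj : Function.Injective Φ := fun x y h => by rw [← hretr x, h, hretr]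
  have huv₀ : u₀ * v₀ = 1 := hΦinj (by rw [_root_.map_mul, hΦu, hΦv, huv, _root_.map_one])
  -- the subalgebra tensor product is a finite type algebra
  haveI hft : Algebra.FiniteType ℂ (⨂[ℂ] j, ↥(A' j)) := by
    set Xset : ∀ j, Set ↥(A' j) := fun j => (Subtype.val ⁻¹' (G j : Set (A j))) with hXset
    have hXfin : ∀ j, (Xset j).Finite :=
      fun j => ((G j).finite_toSet.preimage (Subtype.val_injective.injOn))
    have hXgen : ∀ j, Algebra.adjoin ℂ (Xset j) = ⊤ :=
      fun j => Algebra.adjoin_adjoin_coe_preimage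
    set gens : Set (⨂[ℂ] j, ↥(A' j)) :=
      ⋃ j, (PiTensorProduct.singleAlgHom (R := ℂ) (A := fun j => ↥(A' j)) j) '' (Xset j) with hgens
    have hfin : gens.Finite := Set.finite_iUnion fun j => (hXfin j).image _
    have hsingle : ∀ j (x : ↥(A' j)),
        PiTensorProduct.singleAlgHom (R := ℂ) (A := fun j => ↥(A' j)) j x ∈ Algebra.adjoin ℂ gens := by
      intro j x
      have hx' : x ∈ Algebra.adjoin ℂ (Xset j) := by rw [hXgen]; trivial
      have h1 : PiTensorProduct.singleAlgHom (R := ℂ) (A := fun j => ↥(A' j)) j x ∈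
          (Algebra.adjoin ℂ (Xset j)).map (PiTensorProduct.singleAlgHom (R := ℂ) (A := fun j => ↥(A' j)) j) :=
        by rw [Subalgebra.mem_map]; exact ⟨x, hx', rfl⟩
      rw [AlgHom.map_adjoin] at h1
      exact Algebra.adjoin_mono (Set.subset_iUnion _ j) h1
    have htp : ∀ a', PiTensorProduct.tprod ℂ a' ∈ Algebra.adjoin ℂ gens := by
      intro a'
      rw [tprod_eq_prod_single]
      exact Subalgebra.prod_mem _ fun j _ => hsingle j _
    refine ⟨⟨hfin.toFinset, ?_⟩⟩
    rw [Set.Finite.coe_toFinset, eq_top_iff]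
    intro x _
    have hx : x ∈ Submodule.span ℂ (Set.range (tprod ℂ (s := fun j => ↥(A' j)))) := by
      rw [PiTensorProduct.span_tprod_eq_top]; trivial
    have hx2 : x ∈ Subalgebra.toSubmodule (Algebra.adjoin ℂ gens) :=
      Submodule.span_le.mpr (by rintro y ⟨a', rfl⟩; exact htp a') hx
    exact hx2
  -- characters attached to the two primes
  haveI := hq₁; haveI := hq₂
  haveI hp1 : (q₁.comap Φ.toRingHom).IsPrime := Ideal.IsPrime.comap _
  haveI hp2 : (q₂.comap Φ.toRingHom).IsPrime := Ideal.IsPrime.comap _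
  obtain ⟨M₁, hM₁max, hM₁le⟩ := Ideal.exists_le_maximal _ hp1.ne_top
  obtain ⟨M₂, hM₂max, hM₂le⟩ := Ideal.exists_le_maximal _ hp2.ne_top
  obtain ⟨ε₁, hε₁⟩ := exists_char_of_isMaximal _ M₁ hM₁max
  obtain ⟨ε₂, hε₂⟩ := exists_char_of_isMaximal _ M₂ hM₂max
  have h₁' : u₀ - algebraMap ℂ _ d₁ ∈ q₁.comap Φ.toRingHom := by
    show Φ (u₀ - algebraMap ℂ _ d₁) ∈ q₁
    rw [map_sub, hΦu, AlgHom.commutes]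
    exact h₁
  have h₂' : u₀ - algebraMap ℂ _ d₂ ∈ q₂.comap Φ.toRingHom := by
    show Φ (u₀ - algebraMap ℂ _ d₂) ∈ q₂
    rw [map_sub, hΦu, AlgHom.commutes]
    exact h₂
  have e₁ : ε₁ u₀ = d₁ := by
    have := hε₁ _ (hM₁le h₁')
    rw [map_sub, AlgHom.commutes, sub_eq_zero] at this
    simpa using this
  have e₂ : ε₂ u₀ = d₂ := by
    have := hε₂ _ (hM₂le h₂')
    rw [map_sub, AlgHom.commutes, sub_eq_zero] at this
    simpa using this
  rw [← e₁, ← e₂]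
  exact chars_agree (fun j => ↥(A' j)) (fun j => constU_subalgebra (hA j) (A' j)) u₀ v₀ huv₀ ε₁ ε₂

end Core

/-- If `u` is congruent to a constant modulo each of a family of ideals with trivial
intersection, then `u` is a `ℂ`-linear combination of idempotents. -/
lemma mem_span_idem_of_const_mod {R : Type} [CommRing R] [Algebra ℂ R]
    {n : ℕ} (I : Fin n → Ideal R) (hcov : (⨅ i, I i) = ⊥)
    (u : R) (c : Fin n → ℂ) (hc : ∀ i, u - algebraMap ℂ R (c i) ∈ I i) :
    u ∈ Submodule.span ℂ {e : R | IsIdempotentElem e} := by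
  classical
  set V := Finset.image c Finset.univ with hV
  set J : {v // v ∈ V} → Ideal R := fun v => ⨅ (i : Fin n) (_ : c i = (v : ℂ)), I i with hJ
  have hmemJ : ∀ (v : {v // v ∈ V}) (r : R), r ∈ J v ↔ ∀ i, c i = (v : ℂ) → r ∈ I i := by
    intro v r
    simp [hJ, Ideal.mem_iInf]
  have hinj : ∀ r : R, (∀ v, r ∈ J v) → r = 0 := by
    intro r hr
    have hmem : r ∈ (⨅ i, I i) := by
      rw [Ideal.mem_iInf]
      intro i
      exact (hmemJ ⟨c i, Finset.mem_image_of_mem c (Finset.mem_univ i)⟩ r).mp (hr _) i rfl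
    rwa [hcov, Ideal.mem_bot] at hmem
  have hJu : ∀ v : {v // v ∈ V}, u - algebraMap ℂ R (v : ℂ) ∈ J v := by
    intro v
    rw [hmemJ]
    intro i hi
    rw [← hi]
    exact hc i
  have hpair : Pairwise (Function.onFun IsCoprime J) := by
    intro v w hvw
    rw [Function.onFun, Ideal.isCoprime_iff_sup_eq]
    have hne : (w : ℂ) - (v : ℂ) ≠ 0 :=
      sub_ne_zero.mpr fun h => hvw (Subtype.ext h.symm)
    have hunit : IsUnit (algebraMap ℂ R ((w : ℂ) - (v : ℂ))) :=
      (Ne.isUnit hne).map (algebraMap ℂ R)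
    refine Ideal.eq_top_of_isUnit_mem _ ?_ hunit
    have heq : algebraMap ℂ R ((w : ℂ) - (v : ℂ)) =
        (u - algebraMap ℂ R (v : ℂ)) - (u - algebraMap ℂ R (w : ℂ)) := by
      rw [map_sub]; ring
    rw [heq]
    exact Submodule.sub_mem _ (Ideal.mem_sup_left (hJu v)) (Ideal.mem_sup_right (hJu w))
  set θ := Ideal.quotientInfRingEquivPiQuotient J hpair with hθ
  have hE : ∀ v : {v // v ∈ V}, ∃ e : R,
      ∀ w, Ideal.Quotient.mk (J w) e = if w = v then 1 else 0 := by
    intro v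
    obtain ⟨y, hy⟩ := θ.surjective (fun w => if w = v then 1 else 0)
    obtain ⟨e, rfl⟩ := Ideal.Quotient.mk_surjective y
    refine ⟨e, fun w => ?_⟩
    have h1 : θ (Ideal.Quotient.mk (⨅ w, J w) e) w
        = Ideal.Quotient.mk (J w) e := Ideal.quotientInfToPiQuotient_mk' J e w
    rw [← h1, hy]
  choose e he using hE
  have hidem : ∀ v, IsIdempotentElem (e v) := by
    intro v
    have h0 : ∀ w, (e v * e v - e v) ∈ J w := by
      intro w
      rw [← Ideal.Quotient.eq_zero_iff_mem]
      simp only [map_sub, map_mul, he]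
      split_ifs <;> ring
    have := hinj _ h0
    exact sub_eq_zero.mp this
  have hsum : u = ∑ v : {v // v ∈ V}, (v : ℂ) • e v := by
    have h0 : ∀ w, (u - ∑ v : {v // v ∈ V}, (v : ℂ) • e v) ∈ J w := by
      intro w
      rw [← Ideal.Quotient.eq_zero_iff_mem, map_sub, map_sum]
      have h1 : ∀ v : {v // v ∈ V}, Ideal.Quotient.mk (J w) ((v : ℂ) • e v)
          = if w = v then Ideal.Quotient.mk (J w) (algebraMap ℂ R (v : ℂ)) else 0 := by
        intro v
        rw [Algebra.smul_def, map_mul, he]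
        split_ifs <;> ring
      rw [Finset.sum_congr rfl fun v _ => h1 v]
      rw [Finset.sum_ite_eq Finset.univ w
        (fun v => Ideal.Quotient.mk (J w) (algebraMap ℂ R (v : ℂ)))]
      rw [if_pos (Finset.mem_univ w)]
      rw [← map_sub, Ideal.Quotient.eq_zero_iff_mem]
      exact hJu w
    exact sub_eq_zero.mp (hinj _ h0)
  rw [hsum]
  exact Submodule.sum_mem _ fun v _ =>
    Submodule.smul_mem _ _ (Submodule.subset_span (hidem v))

set_option maxHeartbeats 1000000 in
theorem units_locally_constant_of_stratification
    (R : Type) [CommRing R] [Algebra ℂ R] [IsReduced R] [Algebra.FiniteType ℂ R]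
    (n : ℕ) (I : Fin n → Ideal R)
    -- the closed subschemes `Xᵢ = Spec (R/Iᵢ)` cover `X`
    (hcov : (⨅ i, I i) = ⊥)
    [∀ i, IsReduced (R ⧸ I i)]
    (m : Fin n → ℕ)
    (S : ∀ i : Fin n, Fin (m i) → Type)
    [∀ i j, CommRing (S i j)] [∀ i j, Algebra ℂ (S i j)] [∀ i j, IsReduced (S i j)]
    -- each `Xᵢ` is the image of a surjective morphism from the product `Πⱼ Spec Sᵢⱼ`
    (φ : ∀ i : Fin n, (R ⧸ I i) →ₐ[ℂ] (PiTensorProduct ℂ (S i)))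
    (hφ : ∀ i, Function.Surjective (PrimeSpectrum.comap ((φ i).toRingHom)))
    -- each factor `Spec Sᵢⱼ` receives a surjection from a scheme `Spec Tᵢⱼ` with only
    -- constant invertible functions
    (T : ∀ i : Fin n, Fin (m i) → Type)
    [∀ i j, CommRing (T i j)] [∀ i j, Algebra ℂ (T i j)]
    (ψ : ∀ i j, (S i j) →ₐ[ℂ] (T i j))
    (hψ : ∀ i j, Function.Surjective (PrimeSpectrum.comap ((ψ i j : S i j →+* T i j))))
    (hT : ∀ i j, ∀ u : (T i j)ˣ, ∃ c : ℂˣ, (u : T i j) = algebraMap ℂ (T i j) (c : ℂ)) :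
    ∀ u : Rˣ, (u : R) ∈ Submodule.span ℂ {e : R | IsIdempotentElem e} := by
  intro u
  have step1 : ∀ i, ∃ c : ℂ, (u : R) - algebraMap ℂ R c ∈ I i := by
    intro i
    haveI hQft : Algebra.FiniteType ℂ (R ⧸ I i) :=
      Algebra.FiniteType.of_surjective (Ideal.Quotient.mkₐ ℂ (I i))
        (Ideal.Quotient.mkₐ_surjective ℂ (I i))
    by_cases hQ : Subsingleton (R ⧸ I i)
    · refine ⟨0, ?_⟩
      have hz : Ideal.Quotient.mk (I i) ((u : R) - algebraMap ℂ R 0) = 0 :=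
        Subsingleton.elim _ _
      rwa [Ideal.Quotient.eq_zero_iff_mem] at hz
    · haveI : Nontrivial (R ⧸ I i) := not_subsingleton_iff_nontrivial.mp hQ
      set Qmk := Ideal.Quotient.mkₐ ℂ (I i) with hQmk
      set ub := Qmk (u : R) with hub
      set vb := Qmk ((↑u⁻¹ : R)) with hvb
      have hubvb : ub * vb = 1 := by
        rw [hub, hvb, ← map_mul]
        simp
      have hS : ∀ j, ConstU (S i j) := fun j => constU_of_surjective (ψ i j) (hψ i j) (hT i j)
      have key : ∀ (χ χ' : (R ⧸ I i) →ₐ[ℂ] ℂ), χ ub = χ' ub := by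
        intro χ χ'
        have mkprime : ∀ (χ : (R ⧸ I i) →ₐ[ℂ] ℂ), ∃ q : Ideal (PiTensorProduct ℂ (S i)),
            q.IsPrime ∧ (φ i) ub - algebraMap ℂ _ (χ ub) ∈ q := by
          intro χ
          haveI : (RingHom.ker (χ : (R ⧸ I i) →+* ℂ)).IsPrime := RingHom.ker_isPrime _
          obtain ⟨qq, hqq⟩ := hφ i ⟨RingHom.ker (χ : (R ⧸ I i) →+* ℂ), inferInstance⟩
          refine ⟨qq.asIdeal, qq.isPrime, ?_⟩
          have hcom : qq.asIdeal.comap (φ i).toRingHom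
              = RingHom.ker (χ : (R ⧸ I i) →+* ℂ) := congrArg PrimeSpectrum.asIdeal hqq
          have hker : ub - algebraMap ℂ _ (χ ub) ∈ RingHom.ker (χ : (R ⧸ I i) →+* ℂ) := by
            rw [RingHom.mem_ker]
            show χ (ub - algebraMap ℂ _ (χ ub)) = 0
            rw [map_sub, AlgHom.commutes]
            simp
          rw [← hcom] at hker
          have hmem : (φ i) (ub - algebraMap ℂ _ (χ ub)) ∈ qq.asIdeal := hker
          rwa [map_sub, AlgHom.commutes] at hmem
        obtain ⟨q₁, hq₁, h₁⟩ := mkprime χ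
        obtain ⟨q₂, hq₂, h₂⟩ := mkprime χ'
        exact core_two_primes (S i) hS ((φ i) ub) ((φ i) vb)
          (by rw [← _root_.map_mul, hubvb, _root_.map_one]) q₁ q₂ hq₁ hq₂ _ _ h₁ h₂
      obtain ⟨M, hM⟩ := Ideal.exists_maximal (R ⧸ I i)
      obtain ⟨χ₀, hχ₀⟩ := exists_char_of_isMaximal (R ⧸ I i) M hM
      refine ⟨χ₀ ub, ?_⟩
      have hzero : ub - algebraMap ℂ (R ⧸ I i) (χ₀ ub) = 0 := by
        apply eq_zero_of_forall_char (R ⧸ I i)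
        intro ε
        rw [map_sub, AlgHom.commutes, key ε χ₀]
        simp
      have hz : Qmk ((u : R) - algebraMap ℂ R (χ₀ ub)) = 0 := by
        rw [map_sub, AlgHom.commutes, ← hub]
        exact hzero
      have hz' : Ideal.Quotient.mk (I i) ((u : R) - algebraMap ℂ R (χ₀ ub)) = 0 := by
        rw [← Ideal.Quotient.mkₐ_eq_mk (R₁ := ℂ)]
        exact hz
      rwa [Ideal.Quotient.eq_zero_iff_mem] at hz'
  choose cc hcc using step1
  exact mem_span_idem_of_const_mod I hcov (u : R) cc hcc
end
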